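/- Fix a winner number k with 1 ≤ k ≤ n and assume b_{n−k+1} > 0. The minimum-Gini function g*_k is continuous in p on the interval (0, Σ_{i=n−k+1}^n b_i]. -/

import Mathlib

open Finset

/-- The ascending rearrangement of a vector. -/
noncomputable def sortedAsc {n : ℕ} (a : Fin n → ℝ) : Fin n → ℝ :=
  a ∘ Tuple.sort a

/-- The Gini index of an ascending-sorted nonnegative vector `y` on `Fin k`:
`2 (∑ i, i * y_i) / (k ∑ i, y_i) - (k+1)/k` (with 1-based weights). -/
noncomputable def gini {k : ℕ} (y : Fin k → ℝ) : ℝ :=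
  2 * (∑ i : Fin k, (((i : ℕ) : ℝ) + 1) * y i) / (k * ∑ i, y i) - ((k : ℝ) + 1) / k

/-- The flexible Gini index with winner number `k`: the Gini index of the top `k`
entries of the ascending rearrangement of the allocation. -/
noncomputable def flexGini {n : ℕ} (k : ℕ) (a : Fin n → ℝ) : ℝ :=
  if h : k ≤ n then
    gini (fun i : Fin k => sortedAsc a ⟨n - k + i, by have := i.isLt; omega⟩)
  else 0

/-- Feasibility of allocation `a` for budgets `b`, winner number `k`, price `p`. -/
def Feasible {n : ℕ} (b : Fin n → ℝ) (k : ℕ) (p : ℝ) (a : Fin n → ℝ) : Prop :=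
  (∀ i, 0 ≤ a i) ∧ (∑ i, a i = 1) ∧ (∀ i, a i * p ≤ b i) ∧
    n - k ≤ (Finset.univ.filter fun i => a i = 0).card

open Classical in
/-- The minimum flexible Gini index over feasible allocations (`1` if none exists). -/
noncomputable def gStar {n : ℕ} (b : Fin n → ℝ) (k : ℕ) (p : ℝ) : ℝ :=
  if ∃ a, Feasible b k p a then sInf (flexGini k '' {a | Feasible b k p a}) else 1

/-- The maximum price for winner number `k` under Gini cap `g`. -/
noncomputable def pStar {n : ℕ} (b : Fin n → ℝ) (k : ℕ) (g : ℝ) : ℝ :=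
  sSup {p : ℝ | 0 < p ∧ gStar b k p ≤ g}

/-- The Gini mechanism's price: the maximum of `pStar` over allowed winner numbers. -/
noncomputable def pStarK {n : ℕ} (b : Fin n → ℝ) (K : Finset ℕ) (g : ℝ) : ℝ :=
  sSup ((fun k => pStar b k g) '' (K : Set ℕ))

/-- The `(m+1)`-st smallest budget (0-based index `m`). -/
noncomputable def nthSmallest {n : ℕ} (b : Fin n → ℝ) (m : ℕ) : ℝ :=
  if h : m < n then sortedAsc b ⟨m, h⟩ else 0

/-- The allocation cap `C` at price `p` for winner number `k`. -/
noncomputable def capOf {n : ℕ} (b : Fin n → ℝ) (k : ℕ) (p : ℝ) : ℝ :=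
  sInf {C : ℝ | 0 < C ∧
    1 ≤ ∑ i ∈ Finset.univ.filter (fun i : Fin n => n - k ≤ (i : ℕ)),
        min (sortedAsc b i / p) C}

/-- The winner number chosen by the Gini mechanism (ties broken in favor of more winners). -/
noncomputable def mechWinnerNum {n : ℕ} (b : Fin n → ℝ) (K : Finset ℕ) (g : ℝ) : ℕ :=
  sSup {k | k ∈ K ∧ pStar b k g = pStarK b K g}

/-- The allocation of the Gini mechanism: agents in the bottom `n - k` positions (by budget)
receive `0`; the `k` winners receive `min (bᵢ/p, C)` at the mechanism price `p`. -/
noncomputable def mechAlloc {n : ℕ} (b : Fin n → ℝ) (K : Finset ℕ) (g : ℝ) : Fin n → ℝ :=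
  fun i =>
    if ((Tuple.sort b).symm i : ℕ) < n - mechWinnerNum b K g then 0
    else min (b i / pStarK b K g) (capOf b (mechWinnerNum b K g) (pStarK b K g))

/-- Agent `i`'s spending under the Gini mechanism. -/
noncomputable def spend {n : ℕ} (b : Fin n → ℝ) (K : Finset ℕ) (g : ℝ) (i : Fin n) : ℝ :=
  mechAlloc b K g i * pStarK b K g

/-- Agent `i`'s utility under the Gini mechanism when her valuation is `v`. -/
noncomputable def util {n : ℕ} (b : Fin n → ℝ) (K : Finset ℕ) (g : ℝ) (i : Fin n) (v : ℝ) : ℝ :=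
  mechAlloc b K g i * (v - pStarK b K g)


section Aux
open Finset

lemma monotone_sortedAsc {n : ℕ} (a : Fin n → ℝ) : Monotone (sortedAsc a) :=
  Tuple.monotone_sort a

lemma sortedAsc_of_monotone {n : ℕ} {f : Fin n → ℝ} (hf : Monotone f) : sortedAsc f = f := by
  have h := (Tuple.comp_sort_eq_comp_iff_monotone (f := f) (σ := 1)).mpr (by simpa using hf)
  simpa [sortedAsc] using h.symm

lemma sortedAsc_comp_perm {n : ℕ} (a : Fin n → ℝ) (σ : Equiv.Perm (Fin n)) :
    sortedAsc (a ∘ σ) = sortedAsc a := by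
  simpa [sortedAsc, Function.comp_assoc] using
    Tuple.comp_perm_comp_sort_eq_comp_sort (σ := σ) (f := a)

lemma sortedAsc_idem {n : ℕ} (a : Fin n → ℝ) : sortedAsc (sortedAsc a) = sortedAsc a :=
  sortedAsc_comp_perm a (Tuple.sort a)

lemma sortedAsc_sum {n : ℕ} (a : Fin n → ℝ) : ∑ i, sortedAsc a i = ∑ i, a i :=
  Equiv.sum_comp (Tuple.sort a) a

lemma sortedAsc_nonneg {n : ℕ} {a : Fin n → ℝ} (h : ∀ i, 0 ≤ a i) (i : Fin n) :
    0 ≤ sortedAsc a i := h _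

lemma sortedAsc_le {n : ℕ} {a c : Fin n → ℝ} (hc : Monotone c) (h : ∀ i, a i ≤ c i) (i : Fin n) :
    sortedAsc a i ≤ c i := by
  obtain ⟨j, hij, hji⟩ : ∃ j : Fin n, i ≤ j ∧ Tuple.sort a j ≤ i := by
    by_contra hcon
    push_neg at hcon
    have hcard : (Finset.Ici i).card ≤ (Finset.Ioi i).card := by
      apply Finset.card_le_card_of_injOn (fun j => Tuple.sort a j)
      · intro j hj
        simp only [Finset.mem_coe, Finset.mem_Ici] at hj
        simp only [Finset.mem_coe, Finset.mem_Ioi]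
        exact hcon j hj
      · intro x _ y _ hxy
        exact (Tuple.sort a).injective hxy
    rw [Fin.card_Ici, Fin.card_Ioi] at hcard
    omega
  calc sortedAsc a i ≤ sortedAsc a j := monotone_sortedAsc a hij
    _ = a (Tuple.sort a j) := rfl
    _ ≤ c (Tuple.sort a j) := h _
    _ ≤ c i := hc hji

lemma card_zero_sortedAsc {n : ℕ} (a : Fin n → ℝ) :
    (univ.filter fun j => sortedAsc a j = 0).card = (univ.filter fun j => a j = 0).card := by
  apply Finset.card_bij (fun j _ => Tuple.sort a j)
  · intro j hj
    simp only [Finset.mem_filter, Finset.mem_univ, true_and, sortedAsc,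
      Function.comp_apply] at hj ⊢
    exact (Finset.mem_filter.mp hj).2
  · intro x _ y _ h
    exact (Tuple.sort a).injective h
  · intro j hj
    refine ⟨(Tuple.sort a).symm j, ?_, by simp⟩
    simp only [Finset.mem_filter, Finset.mem_univ, true_and, sortedAsc,
      Function.comp_apply] at hj ⊢
    exact Finset.mem_filter.mpr ⟨Finset.mem_univ _, by simpa using hj⟩

lemma sortedAsc_zero_bottom {n k : ℕ} {a : Fin n → ℝ} (hnn : ∀ i, 0 ≤ a i)
    (hz : n - k ≤ (univ.filter fun i => a i = 0).card) (i : Fin n) (hi : (i:ℕ) < n - k) :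
    sortedAsc a i = 0 := by
  by_contra hne
  have hpos : 0 < sortedAsc a i := lt_of_le_of_ne (sortedAsc_nonneg hnn i) (Ne.symm hne)
  have hsub : (univ.filter fun j => sortedAsc a j = 0) ⊆ Finset.Iio i := by
    intro j hj
    simp only [Finset.mem_filter, Finset.mem_univ, true_and] at hj
    rw [Finset.mem_Iio]
    by_contra hij
    push_neg at hij
    have h2 := monotone_sortedAsc a hij
    rw [hj] at h2
    linarith
  have h3 := Finset.card_le_card hsub
  rw [Fin.card_Iio, card_zero_sortedAsc] at h3
  omega

lemma card_filter_lt {n m : ℕ} (hm : m ≤ n) :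
    (univ.filter fun i : Fin n => (i:ℕ) < m).card = m := by
  have h : (univ.filter fun i : Fin n => (i:ℕ) < m) = Finset.map (Fin.castLEEmb hm) univ := by
    ext j
    simp only [Finset.mem_filter, Finset.mem_univ, true_and, Finset.mem_map, Fin.castLEEmb,
      Function.Embedding.coeFn_mk]
    constructor
    · intro hj
      exact ⟨⟨j, hj⟩, rfl⟩
    · rintro ⟨i, rfl⟩
      simpa using i.isLt
  rw [h, Finset.card_map, Finset.card_univ, Fintype.card_fin]

lemma sum_top {n k : ℕ} (hkn : k ≤ n) (f : Fin n → ℝ) {g : Fin k → Fin n}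
    (hg : ∀ i, (g i : ℕ) = n - k + i) :
    ∑ i : Fin k, f (g i) = ∑ j ∈ univ.filter (fun j : Fin n => n - k ≤ (j:ℕ)), f j := by
  have h : (univ.filter fun j : Fin n => n - k ≤ (j:ℕ))
      = Finset.map ⟨g, by
          intro x y hxy
          have := congrArg (fun z : Fin n => (z:ℕ)) hxy
          simp only [hg] at this
          exact Fin.val_injective (by omega)⟩ univ := by
    ext j
    simp only [Finset.mem_filter, Finset.mem_univ, true_and, Finset.mem_map,
      Function.Embedding.coeFn_mk]
    constructor
    · intro hj
      refine ⟨⟨(j:ℕ) - (n - k), by have := j.isLt; omega⟩, ?_⟩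
      apply Fin.val_injective
      show ((g ⟨(j:ℕ) - (n - k), _⟩ : Fin n) : ℕ) = (j:ℕ)
      rw [hg]
      simp
      omega
    · rintro ⟨i, rfl⟩
      show n - k ≤ ((g i : Fin n) : ℕ)
      rw [hg]
      omega
  rw [h, Finset.sum_map]
  rfl

/-- The total budget of the top `k` agents. -/
noncomputable def Stot {n : ℕ} (b : Fin n → ℝ) (k : ℕ) : ℝ :=
  ∑ i ∈ Finset.univ.filter (fun i : Fin n => n - k ≤ (i : ℕ)), b i

/-- The proportional allocation among the top `k` agents. -/
noncomputable def wfun {n : ℕ} (b : Fin n → ℝ) (k : ℕ) : Fin n → ℝ :=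
  fun i => if n - k ≤ (i : ℕ) then b i / Stot b k else 0

section BK
variable {n : ℕ} {b : Fin n → ℝ} {k : ℕ}

lemma Stot_pos (hnn : ∀ i, 0 ≤ b i) (hk1 : 1 ≤ k) (hkn : k ≤ n)
    (hpos : 0 < b ⟨n - k, Nat.sub_lt (by omega) (by omega)⟩) : 0 < Stot b k := by
  have hmem : (⟨n - k, Nat.sub_lt (by omega) (by omega)⟩ : Fin n) ∈ univ.filter (fun i : Fin n => n - k ≤ (i:ℕ)) := by
    simp only [Finset.mem_filter, Finset.mem_univ, true_and]
    exact le_refl _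
  calc (0:ℝ) < b ⟨n - k, Nat.sub_lt (by omega) (by omega)⟩ := hpos
    _ ≤ Stot b k := Finset.single_le_sum (fun i _ => hnn i) hmem

lemma wfun_nonneg (hnn : ∀ i, 0 ≤ b i) (hS : 0 < Stot b k) (i : Fin n) : 0 ≤ wfun b k i := by
  unfold wfun
  split
  · exact div_nonneg (hnn i) hS.le
  · exact le_refl 0

lemma wfun_monotone (hmono : Monotone b) (hnn : ∀ i, 0 ≤ b i) (hS : 0 < Stot b k) :
    Monotone (wfun b k) := by
  intro i j hij
  unfold wfun
  rcases le_or_gt (n - k) (i:ℕ) with hi | hi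
  · rw [if_pos hi, if_pos (le_trans hi hij)]
    exact (div_le_div_iff_of_pos_right hS).mpr (hmono hij)
  · rw [if_neg (not_le.mpr hi)]
    split
    · exact div_nonneg (hnn j) hS.le
    · exact le_refl 0

lemma wfun_zero {i : Fin n} (hi : (i:ℕ) < n - k) : wfun b k i = 0 :=
  if_neg (not_le.mpr hi)

lemma wfun_top {i : Fin n} (hi : n - k ≤ (i:ℕ)) : wfun b k i = b i / Stot b k :=
  if_pos hi

lemma wfun_sum (hS : 0 < Stot b k) : ∑ i, wfun b k i = 1 := by
  have h : ∑ i, wfun b k i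
      = ∑ i ∈ univ.filter (fun i : Fin n => n - k ≤ (i:ℕ)), b i / Stot b k := by
    rw [Finset.sum_filter]
    rfl
  rw [h, ← Finset.sum_div]
  exact div_self hS.ne'

lemma wfun_zero_card (hkn : k ≤ n) :
    n - k ≤ (univ.filter fun i => wfun b k i = 0).card := by
  have hsub : (univ.filter fun i : Fin n => (i:ℕ) < n - k)
      ⊆ univ.filter fun i => wfun b k i = 0 := by
    intro i hi
    simp only [Finset.mem_filter, Finset.mem_univ, true_and] at hi ⊢
    exact wfun_zero hi
  have := Finset.card_le_card hsub
  rw [card_filter_lt (by omega)] at this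
  omega

lemma wfun_feasible (hmono : Monotone b) (hnn : ∀ i, 0 ≤ b i) (hkn : k ≤ n)
    (hS : 0 < Stot b k) {p : ℝ} (hp : 0 < p) (hpS : p ≤ Stot b k) :
    Feasible b k p (wfun b k) := by
  refine ⟨wfun_nonneg hnn hS, wfun_sum hS, ?_, wfun_zero_card hkn⟩
  intro i
  unfold wfun
  split
  · rw [div_mul_eq_mul_div, mul_div_assoc]
    calc b i * (p / Stot b k) ≤ b i * 1 := by
          apply mul_le_mul_of_nonneg_left _ (hnn i)
          rw [div_le_one hS]
          exact hpS
      _ = b i := mul_one _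
  · simpa using hnn i

lemma flexGini_sortedAsc (a : Fin n → ℝ) : flexGini k (sortedAsc a) = flexGini k a := by
  unfold flexGini
  simp only [sortedAsc_idem]

lemma gini_eq (hk : (k:ℝ) ≠ 0) {y : Fin k → ℝ} (hsum : ∑ i, y i = 1) :
    gini y = 2 * (∑ i : Fin k, (((i : ℕ) : ℝ) + 1) * y i) / k - ((k : ℝ) + 1) / k := by
  rw [gini, hsum, mul_one]

lemma weighted_ge_one (hk1 : 1 ≤ k) {y : Fin k → ℝ} (hy : ∀ i, 0 ≤ y i)
    (hsum : ∑ i, y i = 1) : 1 ≤ ∑ i : Fin k, (((i : ℕ) : ℝ) + 1) * y i := by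
  rw [← hsum]
  apply Finset.sum_le_sum
  intro i _
  nlinarith [hy i, (Nat.cast_nonneg (i:ℕ) : (0:ℝ) ≤ (i:ℕ))]

lemma weighted_le_k {y : Fin k → ℝ} (hy : ∀ i, 0 ≤ y i)
    (hsum : ∑ i, y i = 1) : ∑ i : Fin k, (((i : ℕ) : ℝ) + 1) * y i ≤ k := by
  calc ∑ i : Fin k, (((i : ℕ) : ℝ) + 1) * y i ≤ ∑ i : Fin k, (k:ℝ) * y i := by
        apply Finset.sum_le_sum
        intro i _
        apply mul_le_mul_of_nonneg_right _ (hy i)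
        have h1 : (i:ℕ) + 1 ≤ k := i.isLt
        exact_mod_cast h1
    _ = k := by rw [← Finset.mul_sum, hsum, mul_one]

lemma flexGini_formula (hkn : k ≤ n) {a : Fin n → ℝ} (hma : Monotone a) (hk1 : 1 ≤ k)
    {g : Fin k → Fin n} (hg : ∀ i, ((g i : ℕ)) = n - k + i)
    (hsum : ∑ i, a (g i) = 1) :
    flexGini k a = 2 * (∑ i : Fin k, (((i : ℕ) : ℝ) + 1) * a (g i)) / k - ((k : ℝ) + 1) / k := by
  have h1 : (fun i : Fin k => sortedAsc a ⟨n - k + ↑i, by have := i.isLt; omega⟩)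
      = fun i : Fin k => a (g i) := by
    funext i
    rw [sortedAsc_of_monotone hma]
    congr 1
    exact Fin.val_injective (by simp [hg i])
  unfold flexGini
  rw [dif_pos hkn, h1, gini_eq (by exact_mod_cast (by omega : k ≠ 0)) hsum]

lemma top_sum_eq_total (hkn : k ≤ n) {a : Fin n → ℝ}
    (hbot : ∀ i : Fin n, (i:ℕ) < n - k → a i = 0)
    {g : Fin k → Fin n} (hg : ∀ i, ((g i : ℕ)) = n - k + i) :
    ∑ i, a (g i) = ∑ i, a i := by
  rw [sum_top hkn a hg]
  rw [← Finset.sum_filter_add_sum_filter_not univ (fun j : Fin n => n - k ≤ (j:ℕ)) a]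
  have h0 : ∑ j ∈ univ.filter (fun j : Fin n => ¬ n - k ≤ (j:ℕ)), a j = 0 := by
    apply Finset.sum_eq_zero
    intro j hj
    simp only [Finset.mem_filter, Finset.mem_univ, true_and, not_le] at hj
    exact hbot j hj
  rw [h0, add_zero]

lemma feasible_sortedAsc (hmono : Monotone b) {p : ℝ} (hp : 0 < p) {a : Fin n → ℝ}
    (ha : Feasible b k p a) : Feasible b k p (sortedAsc a) := by
  obtain ⟨h0, h1, h2, h3⟩ := ha
  refine ⟨sortedAsc_nonneg h0, by rw [sortedAsc_sum]; exact h1, ?_, ?_⟩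
  · intro i
    have hle : ∀ j, a j ≤ b j / p := fun j => (le_div_iff₀ hp).mpr (h2 j)
    have hc : Monotone (fun j => b j / p) := fun x y hxy =>
      (div_le_div_iff_of_pos_right hp).mpr (hmono hxy)
    have h4 := sortedAsc_le hc hle i
    exact (le_div_iff₀ hp).mp h4
  · rw [card_zero_sortedAsc]
    exact h3

lemma sortedAsc_top_sum_one (hkn : k ≤ n) {p : ℝ} {a : Fin n → ℝ} (ha : Feasible b k p a)
    {g : Fin k → Fin n} (hg : ∀ i, ((g i : ℕ)) = n - k + i) :
    ∑ i, sortedAsc a (g i) = 1 := by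
  rw [top_sum_eq_total hkn (fun i hi => sortedAsc_zero_bottom ha.1 ha.2.2.2 i hi) hg,
    sortedAsc_sum]
  exact ha.2.1

lemma flexGini_feasible_eq (hmono : Monotone b) (hk1 : 1 ≤ k) (hkn : k ≤ n)
    {p : ℝ} (hp : 0 < p) {a : Fin n → ℝ} (ha : Feasible b k p a)
    {g : Fin k → Fin n} (hg : ∀ i, ((g i : ℕ)) = n - k + i) :
    flexGini k a
      = 2 * (∑ i : Fin k, (((i : ℕ) : ℝ) + 1) * sortedAsc a (g i)) / k - ((k : ℝ) + 1) / k := by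
  rw [← flexGini_sortedAsc a]
  exact flexGini_formula hkn (monotone_sortedAsc a) hk1 hg (sortedAsc_top_sum_one hkn ha hg)

lemma flexGini_feasible_bounds (hmono : Monotone b) (hk1 : 1 ≤ k) (hkn : k ≤ n)
    {p : ℝ} (hp : 0 < p) {a : Fin n → ℝ} (ha : Feasible b k p a) :
    -1 ≤ flexGini k a ∧ flexGini k a ≤ 1 := by
  have hk0 : (0:ℝ) < k := by exact_mod_cast hk1
  set g : Fin k → Fin n := fun i => ⟨n - k + i, by have := i.isLt; omega⟩ with hgdef
  have hg : ∀ i : Fin k, ((g i : ℕ)) = n - k + i := fun i => rfl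
  have hs1 : ∑ i, sortedAsc a (g i) = 1 := sortedAsc_top_sum_one hkn ha hg
  have hy : ∀ i : Fin k, 0 ≤ sortedAsc a (g i) := fun i => sortedAsc_nonneg ha.1 _
  have hA1 := weighted_ge_one hk1 hy hs1
  have hAk := weighted_le_k hy hs1
  rw [flexGini_feasible_eq hmono hk1 hkn hp ha hg]
  set A := ∑ i : Fin k, (((i : ℕ) : ℝ) + 1) * sortedAsc a (g i) with hAdef
  have he : 2 * A / k - ((k:ℝ) + 1) / k = (2 * A - ((k:ℝ) + 1)) / k := by ring
  rw [he]
  constructor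
  · rw [le_div_iff₀ hk0]
    linarith
  · rw [div_le_one hk0]
    linarith

lemma gStar_eq (hmono : Monotone b) (hnn : ∀ i, 0 ≤ b i) (hk1 : 1 ≤ k) (hkn : k ≤ n)
    (hpos : 0 < b ⟨n - k, Nat.sub_lt (by omega) (by omega)⟩) {p : ℝ} (hp : 0 < p) (hpS : p ≤ Stot b k) :
    gStar b k p = sInf (flexGini k '' {a | Feasible b k p a}) :=
  if_pos ⟨wfun b k, wfun_feasible hmono hnn hkn (Stot_pos hnn hk1 hkn hpos) hp hpS⟩

lemma gStar_bddBelow (hmono : Monotone b) (hk1 : 1 ≤ k) (hkn : k ≤ n) {p : ℝ} (hp : 0 < p) :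
    BddBelow (flexGini k '' {a | Feasible b k p a}) := by
  refine ⟨-1, ?_⟩
  rintro y ⟨a, ha, rfl⟩
  exact (flexGini_feasible_bounds hmono hk1 hkn hp ha).1

lemma gStar_le_flexGini (hmono : Monotone b) (hnn : ∀ i, 0 ≤ b i) (hk1 : 1 ≤ k) (hkn : k ≤ n)
    (hpos : 0 < b ⟨n - k, Nat.sub_lt (by omega) (by omega)⟩) {p : ℝ} (hp : 0 < p) (hpS : p ≤ Stot b k)
    {a : Fin n → ℝ} (ha : Feasible b k p a) : gStar b k p ≤ flexGini k a := by
  rw [gStar_eq hmono hnn hk1 hkn hpos hp hpS]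
  exact csInf_le (gStar_bddBelow hmono hk1 hkn hp) ⟨a, ha, rfl⟩

lemma le_gStar (hmono : Monotone b) (hnn : ∀ i, 0 ≤ b i) (hk1 : 1 ≤ k) (hkn : k ≤ n)
    (hpos : 0 < b ⟨n - k, Nat.sub_lt (by omega) (by omega)⟩) {p : ℝ} (hp : 0 < p) (hpS : p ≤ Stot b k)
    {c : ℝ} (h : ∀ a, Feasible b k p a → c ≤ flexGini k a) : c ≤ gStar b k p := by
  rw [gStar_eq hmono hnn hk1 hkn hpos hp hpS]
  have hne : (flexGini k '' {a | Feasible b k p a}).Nonempty :=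
    ⟨flexGini k (wfun b k),
      ⟨wfun b k, wfun_feasible hmono hnn hkn (Stot_pos hnn hk1 hkn hpos) hp hpS, rfl⟩⟩
  apply le_csInf hne
  rintro y ⟨a, ha, rfl⟩
  exact h a ha

lemma gStar_mono (hmono : Monotone b) (hnn : ∀ i, 0 ≤ b i) (hk1 : 1 ≤ k) (hkn : k ≤ n)
    (hpos : 0 < b ⟨n - k, Nat.sub_lt (by omega) (by omega)⟩) {q q' : ℝ} (hq : 0 < q) (hqq' : q ≤ q')
    (hq'S : q' ≤ Stot b k) : gStar b k q ≤ gStar b k q' := by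
  have hq' : 0 < q' := lt_of_lt_of_le hq hqq'
  apply le_gStar hmono hnn hk1 hkn hpos hq' hq'S
  intro a ha
  apply gStar_le_flexGini hmono hnn hk1 hkn hpos hq (le_trans hqq' hq'S)
  exact ⟨ha.1, ha.2.1,
    fun i => le_trans (mul_le_mul_of_nonneg_left hqq' (ha.1 i)) (ha.2.2.1 i), ha.2.2.2⟩

lemma gStar_upper (hmono : Monotone b) (hnn : ∀ i, 0 ≤ b i) (hk1 : 1 ≤ k) (hkn : k ≤ n)
    (hpos : 0 < b ⟨n - k, Nat.sub_lt (by omega) (by omega)⟩) {q q' : ℝ} (hq : 0 < q) (hqq' : q ≤ q')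
    (hqS : q < Stot b k) (hq'S : q' ≤ Stot b k) :
    gStar b k q' ≤ gStar b k q
      + 2 * (Stot b k * (q' - q) / (q' * (Stot b k - q))) := by
  have hS : 0 < Stot b k := Stot_pos hnn hk1 hkn hpos
  have hq' : 0 < q' := lt_of_lt_of_le hq hqq'
  have hk0 : (0:ℝ) < k := by exact_mod_cast hk1
  set S := Stot b k with hSdef
  set s := S * (q' - q) / (q' * (S - q)) with hsdef
  have hden : 0 < q' * (S - q) := mul_pos hq' (by linarith)
  have hs0 : 0 ≤ s := div_nonneg (mul_nonneg hS.le (by linarith)) hden.le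
  have hs1 : s ≤ 1 := by
    rw [hsdef, div_le_one hden]
    nlinarith
  have hkey : (1 - s) * q' / q + s * q' / S = 1 := by
    rw [hsdef]
    have hSq : S - q ≠ 0 := ne_of_gt (by linarith)
    field_simp
    ring
  have hmain : gStar b k q' - 2 * s ≤ gStar b k q := by
    apply le_gStar hmono hnn hk1 hkn hpos hq (le_of_lt hqS)
    intro a ha
    set t := sortedAsc a with htdef
    have hta : Feasible b k q t := feasible_sortedAsc hmono hq ha
    set w := wfun b k with hwdef
    have hw : Feasible b k q' w := wfun_feasible hmono hnn hkn hS hq' hq'S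
    set m : Fin n → ℝ := fun i => (1 - s) * t i + s * w i with hmdef
    have hmbot : ∀ i : Fin n, (i:ℕ) < n - k → m i = 0 := by
      intro i hi
      simp only [hmdef]
      rw [htdef, sortedAsc_zero_bottom ha.1 ha.2.2.2 i hi, hwdef, wfun_zero hi]
      ring
    have hmf : Feasible b k q' m := by
      refine ⟨?_, ?_, ?_, ?_⟩
      · intro i
        exact add_nonneg (mul_nonneg (by linarith) (hta.1 i)) (mul_nonneg hs0 (hw.1 i))
      · simp only [hmdef]
        rw [Finset.sum_add_distrib, ← Finset.mul_sum, ← Finset.mul_sum, hta.2.1, hw.2.1]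
        ring
      · intro i
        rcases lt_or_ge ((i:ℕ)) (n - k) with hi | hi
        · rw [hmbot i hi, zero_mul]
          exact hnn i
        · have htle : t i ≤ b i / q := (le_div_iff₀ hq).mpr (hta.2.2.1 i)
          have hwt : w i = b i / S := wfun_top hi
          have e1 : m i * q' = (1 - s) * t i * q' + s * (b i / S) * q' := by
            simp only [hmdef]
            rw [hwt]
            ring
          have e2 : (1 - s) * t i * q' ≤ (1 - s) * (b i / q) * q' := by
            apply mul_le_mul_of_nonneg_right _ hq'.le
            exact mul_le_mul_of_nonneg_left htle (by linarith)
          rw [e1]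
          calc (1 - s) * t i * q' + s * (b i / S) * q'
              ≤ (1 - s) * (b i / q) * q' + s * (b i / S) * q' := by linarith
            _ = b i * ((1 - s) * q' / q + s * q' / S) := by ring
            _ = b i := by rw [hkey, mul_one]
      · have hsub : (univ.filter fun i : Fin n => (i:ℕ) < n - k)
            ⊆ univ.filter fun i => m i = 0 := by
          intro i hi
          simp only [Finset.mem_filter, Finset.mem_univ, true_and] at hi ⊢
          exact hmbot i hi
        have hcard := Finset.card_le_card hsub
        rw [card_filter_lt (by omega)] at hcard
        omega
    set g : Fin k → Fin n := fun i => ⟨n - k + i, by have := i.isLt; omega⟩ with hgdef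
    have hg : ∀ i : Fin k, ((g i : ℕ)) = n - k + i := fun i => rfl
    have hmmono : Monotone m := by
      apply Monotone.add
      · exact (monotone_sortedAsc a).const_mul (by linarith)
      · exact (wfun_monotone hmono hnn hS).const_mul hs0
    have hts1 : ∑ i, t (g i) = 1 := sortedAsc_top_sum_one hkn ha hg
    have hws1 : ∑ i, w (g i) = 1 := by
      rw [hwdef, top_sum_eq_total hkn (fun i hi => wfun_zero hi) hg]
      exact hw.2.1
    have hms1 : ∑ i, m (g i) = 1 := by
      rw [top_sum_eq_total hkn hmbot hg]
      exact hmf.2.1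
    set At := ∑ i : Fin k, (((i : ℕ) : ℝ) + 1) * t (g i) with hAt
    set Aw := ∑ i : Fin k, (((i : ℕ) : ℝ) + 1) * w (g i) with hAw
    set Am := ∑ i : Fin k, (((i : ℕ) : ℝ) + 1) * m (g i) with hAm
    have hAmsplit : Am = (1 - s) * At + s * Aw := by
      rw [hAt, hAw, hAm, Finset.mul_sum, Finset.mul_sum, ← Finset.sum_add_distrib]
      apply Finset.sum_congr rfl
      intro i _
      simp only [hmdef]
      ring
    have hAt1 : 1 ≤ At := weighted_ge_one hk1 (fun i => hta.1 _) hts1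
    have hAwk : Aw ≤ k := weighted_le_k (fun i => hw.1 _) hws1
    have hfm : flexGini k m = 2 * Am / k - ((k:ℝ)+1)/k :=
      flexGini_formula hkn hmmono hk1 hg hms1
    have hft : flexGini k a = 2 * At / k - ((k:ℝ)+1)/k := by
      rw [← flexGini_sortedAsc a]
      exact flexGini_formula hkn (monotone_sortedAsc a) hk1 hg hts1
    have hle1 : gStar b k q' ≤ flexGini k m :=
      gStar_le_flexGini hmono hnn hk1 hkn hpos hq' hq'S hmf
    have hAmle : Am ≤ At + s * k := by nlinarith
    have hfin : flexGini k m ≤ flexGini k a + 2 * s := by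
      rw [hfm, hft]
      have h2 : 2 * Am / k ≤ (2 * At + 2 * s * k) / k :=
        (div_le_div_iff_of_pos_right hk0).mpr (by nlinarith)
      have h3 : (2 * At + 2 * s * k) / k = 2 * At / k + 2 * s := by
        field_simp
      linarith
    linarith
  linarith

lemma gStar_lower (hmono : Monotone b) (hnn : ∀ i, 0 ≤ b i) (hk1 : 1 ≤ k) (hkn : k ≤ n)
    (hpos : 0 < b ⟨n - k, Nat.sub_lt (by omega) (by omega)⟩) {q : ℝ} (hq : 0 < q) (hqS : q ≤ Stot b k) :
    flexGini k (wfun b k) - 2 * ((Stot b k - q) / q) ≤ gStar b k q := by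
  have hS : 0 < Stot b k := Stot_pos hnn hk1 hkn hpos
  have hk0 : (0:ℝ) < k := by exact_mod_cast hk1
  set S := Stot b k with hSdef
  apply le_gStar hmono hnn hk1 hkn hpos hq hqS
  intro a ha
  set g : Fin k → Fin n := fun i => ⟨n - k + i, by have := i.isLt; omega⟩ with hgdef
  have hg : ∀ i : Fin k, ((g i : ℕ)) = n - k + i := fun i => rfl
  have hgtop : ∀ i : Fin k, n - k ≤ ((g i):ℕ) := fun i => by rw [hg]; omega
  set t := sortedAsc a with htdef
  have hta : Feasible b k q t := feasible_sortedAsc hmono hq ha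
  have hts1 : ∑ i, t (g i) = 1 := sortedAsc_top_sum_one hkn ha hg
  have htle : ∀ i : Fin k, t (g i) ≤ b (g i) / q := fun i => (le_div_iff₀ hq).mpr (hta.2.2.1 _)
  have hsumb : ∑ i : Fin k, b (g i) = S := sum_top hkn b hg
  have hws1 : ∑ i, (wfun b k) (g i) = 1 := by
    rw [top_sum_eq_total hkn (fun i hi => wfun_zero hi) hg]
    exact wfun_sum hS
  set At := ∑ i : Fin k, (((i:ℕ):ℝ)+1) * t (g i) with hAt
  set Aw := ∑ i : Fin k, (((i:ℕ):ℝ)+1) * (wfun b k) (g i) with hAw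
  set Bw := ∑ i : Fin k, (((i:ℕ):ℝ)+1) * b (g i) with hBw
  have hBw0 : 0 ≤ Bw := Finset.sum_nonneg (fun i _ => mul_nonneg (by positivity) (hnn _))
  have hAwBw : Aw = Bw / S := by
    rw [hAw, hBw, Finset.sum_div]
    apply Finset.sum_congr rfl
    intro i _
    rw [wfun_top (hgtop i), mul_div_assoc]
  have hsumd : ∑ i : Fin k, (b (g i) / q - t (g i)) = S / q - 1 := by
    rw [Finset.sum_sub_distrib, hts1, ← Finset.sum_div, hsumb]
  have hdle : ∑ i : Fin k, (((i:ℕ):ℝ)+1) * (b (g i)/q - t (g i)) ≤ k * (S/q - 1) := by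
    rw [← hsumd, Finset.mul_sum]
    apply Finset.sum_le_sum
    intro i _
    apply mul_le_mul_of_nonneg_right
    · have h1 : (i:ℕ) + 1 ≤ k := i.isLt
      exact_mod_cast h1
    · have h2 := htle i
      linarith
  have hAtsplit : At = Bw / q - ∑ i : Fin k, (((i:ℕ):ℝ)+1) * (b (g i)/q - t (g i)) := by
    rw [hAt, hBw, Finset.sum_div, ← Finset.sum_sub_distrib]
    apply Finset.sum_congr rfl
    intro i _
    ring
  have hBwq : Bw / S ≤ Bw / q := by gcongr
  have h5 : (S - q)/q = S/q - 1 := by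
    field_simp
  have hAtge : Aw - (k:ℝ) * ((S - q)/q) ≤ At := by
    rw [hAwBw, h5]
    linarith
  have hfa : flexGini k a = 2 * At / k - ((k:ℝ)+1)/k := by
    rw [← flexGini_sortedAsc a]
    exact flexGini_formula hkn (monotone_sortedAsc a) hk1 hg hts1
  have hfw : flexGini k (wfun b k) = 2 * Aw / k - ((k:ℝ)+1)/k :=
    flexGini_formula hkn (wfun_monotone hmono hnn hS) hk1 hg hws1
  rw [hfa, hfw]
  have h7 : 2*Aw/k - 2*((S-q)/q) ≤ (2*Aw - 2*(k:ℝ)*((S-q)/q))/k := le_of_eq (by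
    field_simp)
  have h8 : (2*Aw - 2*(k:ℝ)*((S-q)/q))/k ≤ 2*At/k :=
    (div_le_div_iff_of_pos_right hk0).mpr (by linarith)
  linarith

lemma gStar_le_Gw (hmono : Monotone b) (hnn : ∀ i, 0 ≤ b i) (hk1 : 1 ≤ k) (hkn : k ≤ n)
    (hpos : 0 < b ⟨n - k, Nat.sub_lt (by omega) (by omega)⟩) :
    gStar b k (Stot b k) ≤ flexGini k (wfun b k) := by
  have hS : 0 < Stot b k := Stot_pos hnn hk1 hkn hpos
  exact gStar_le_flexGini hmono hnn hk1 hkn hpos hS le_rfl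
    (wfun_feasible hmono hnn hkn hS hS le_rfl)

end BK
end Aux

/-- If `b_{n-k+1} > 0`, the minimum-Gini function `g*_k` is continuous on
`(0, ∑_{i=n-k+1}^n b_i]`. -/
theorem gStar_continuousOn {n : ℕ} (b : Fin n → ℝ) (hmono : Monotone b) (hnn : ∀ i, 0 ≤ b i)
    (k : ℕ) (hk1 : 1 ≤ k) (hkn : k ≤ n) (hpos : 0 < b ⟨n - k, by omega⟩) :
    ContinuousOn (fun p => gStar b k p)
      (Set.Ioc 0 (∑ i ∈ Finset.univ.filter (fun i : Fin n => n - k ≤ (i : ℕ)), b i)) := by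
  have hS : 0 < Stot b k := Stot_pos hnn hk1 hkn hpos
  show ContinuousOn (fun p => gStar b k p) (Set.Ioc 0 (Stot b k))
  intro p hp
  obtain ⟨hp0, hpS⟩ := hp
  rw [Metric.continuousWithinAt_iff]
  intro ε hε
  set S := Stot b k with hSdef
  rcases eq_or_lt_of_le hpS with heq | hlt
  · -- p = S
    have hδpos : 0 < min (S/2) (ε*S/8) := lt_min (by positivity) (by positivity)
    refine ⟨min (S/2) (ε*S/8), hδpos, ?_⟩
    intro x hx hdist
    obtain ⟨hx0, hxS⟩ := hx
    rw [Real.dist_eq] at hdist ⊢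
    have habs := abs_lt.mp hdist
    have hxp : x ≤ p := by rw [heq]; exact hxS
    have hx2 : S/2 ≤ x := by
      have h1 := min_le_left (S/2) (ε*S/8)
      have h2 : p - x < S/2 := by linarith [habs.1]
      rw [heq] at h2
      linarith
    have h1 : gStar b k x ≤ gStar b k p :=
      gStar_mono hmono hnn hk1 hkn hpos hx0 hxp hpS
    have h2 : gStar b k p ≤ flexGini k (wfun b k) := by
      rw [heq]
      exact gStar_le_Gw hmono hnn hk1 hkn hpos
    have h3 : flexGini k (wfun b k) - 2 * ((S - x)/x) ≤ gStar b k x :=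
      gStar_lower hmono hnn hk1 hkn hpos hx0 hxS
    have hSx : S - x < ε*S/8 := by
      have h4 := min_le_right (S/2) (ε*S/8)
      have h5 : p - x < ε*S/8 := by linarith [habs.1]
      rw [heq] at h5
      linarith
    have hb : 2 * ((S - x)/x) ≤ ε/2 := by
      have h6 : (S - x)/x ≤ (ε*S/8)/(S/2) :=
        div_le_div₀ (by positivity) hSx.le (by positivity) hx2
      have h7 : (ε*S/8)/(S/2) = ε/4 := by
        field_simp
        ring
      linarith
    rw [abs_lt]
    constructor <;> linarith
  · -- p < S
    have hSp : 0 < S - p := by linarith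
    set δ := min (ε * p * (S - p) / (8 * S)) (p/2) with hδ
    have hδpos : 0 < δ :=
      lt_min (div_pos (mul_pos (mul_pos hε hp0) hSp) (by positivity)) (by positivity)
    have hδ1 : δ ≤ ε * p * (S - p) / (8 * S) := min_le_left _ _
    refine ⟨δ, hδpos, ?_⟩
    intro x hx hdist
    obtain ⟨hx0, hxS⟩ := hx
    rw [Real.dist_eq] at hdist ⊢
    have habs := abs_lt.mp hdist
    have hden0 : 0 < p * (S - p) := mul_pos hp0 hSp
    have hkey : S * δ / (p * (S - p)) ≤ ε / 8 := by
      calc S * δ / (p * (S - p)) ≤ S * (ε * p * (S - p) / (8 * S)) / (p * (S - p)) :=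
            (div_le_div_iff_of_pos_right hden0).mpr (mul_le_mul_of_nonneg_left hδ1 hS.le)
        _ = ε / 8 := by
            field_simp
    rcases le_or_gt p x with hpx | hxp
    · -- p ≤ x
      have h1 : gStar b k p ≤ gStar b k x := gStar_mono hmono hnn hk1 hkn hpos hp0 hpx hxS
      have h2 := gStar_upper hmono hnn hk1 hkn hpos hp0 hpx hlt hxS
      have hb : Stot b k * (x - p) / (x * (Stot b k - p)) ≤ ε / 8 := by
        have hnum : S * (x - p) ≤ S * δ :=
          mul_le_mul_of_nonneg_left (by linarith [habs.2]) hS.le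
        have hden : p * (S - p) ≤ x * (S - p) :=
          mul_le_mul_of_nonneg_right hpx hSp.le
        calc S * (x - p) / (x * (S - p)) ≤ S * δ / (p * (S - p)) :=
              div_le_div₀ (mul_nonneg hS.le hδpos.le) hnum hden0 hden
          _ ≤ ε / 8 := hkey
      rw [abs_lt]
      constructor <;> linarith
    · -- x < p
      have h1 : gStar b k x ≤ gStar b k p := gStar_mono hmono hnn hk1 hkn hpos hx0 hxp.le hpS
      have h2 := gStar_upper hmono hnn hk1 hkn hpos hx0 hxp.le (lt_trans hxp hlt) hpS
      have hb : Stot b k * (p - x) / (p * (Stot b k - x)) ≤ ε / 8 := by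
        have hnum : S * (p - x) ≤ S * δ :=
          mul_le_mul_of_nonneg_left (by linarith [habs.1]) hS.le
        have hden : p * (S - p) ≤ p * (S - x) :=
          mul_le_mul_of_nonneg_left (by linarith) hp0.le
        calc S * (p - x) / (p * (S - x)) ≤ S * δ / (p * (S - p)) :=
              div_le_div₀ (mul_nonneg hS.le hδpos.le) hnum hden0 hden
          _ ≤ ε / 8 := hkey
      rw [abs_lt]
      constructor <;> linarith
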